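/- The function R(τ) = ((1−τ)/2)·log₂(1 + βτ/(1−τ)), β > 0, is strictly concave on (0,1) and satisfies lim_{τ→0⁺} R(τ) = 0 and lim_{τ→1⁻} R(τ) = 0, hence attains a unique interior maximum. -/

import Mathlib

open Real Filter Set

private lemma pos_aux {β : ℝ} (hβ : 0 < β) {x : ℝ} (hx0 : 0 < x) (hx1 : x < 1) :
    0 < 1 + (β - 1) * x := by nlinarith

private lemma hasDerivAt_H {β : ℝ} (hβ : 0 < β) {x : ℝ} (hx0 : 0 < x) (hx1 : x < 1) :
    HasDerivAt (fun τ : ℝ => (1 - τ) * (Real.log (1 + (β - 1) * τ) - Real.log (1 - τ)))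
      ((-1) * (Real.log (1 + (β - 1) * x) - Real.log (1 - x)) +
        (1 - x) * ((β - 1) / (1 + (β - 1) * x) - (-1) / (1 - x))) x := by
  have h1 : HasDerivAt (fun τ : ℝ => 1 + (β - 1) * τ) (β - 1) x := by
    simpa using ((hasDerivAt_id x).const_mul (β - 1)).const_add 1
  have h2 : HasDerivAt (fun τ : ℝ => 1 - τ) (-1) x := by
    exact (hasDerivAt_id x).const_sub 1
  have hl1 : HasDerivAt (fun τ : ℝ => Real.log (1 + (β - 1) * τ))
      ((β - 1) / (1 + (β - 1) * x)) x := h1.log (ne_of_gt (pos_aux hβ hx0 hx1))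
  have hl2 : HasDerivAt (fun τ : ℝ => Real.log (1 - τ)) ((-1) / (1 - x)) x :=
    h2.log (by linarith)
  exact h2.mul (hl1.sub hl2)

private lemma hasDerivAt_H1 {β : ℝ} (hβ : 0 < β) {x : ℝ} (hx0 : 0 < x) (hx1 : x < 1) :
    HasDerivAt (fun τ : ℝ => (-1) * (Real.log (1 + (β - 1) * τ) - Real.log (1 - τ)) +
        (1 - τ) * ((β - 1) / (1 + (β - 1) * τ) - (-1) / (1 - τ)))
      (-(β ^ 2) / ((1 + (β - 1) * x) ^ 2 * (1 - x))) x := by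
  have ha : 0 < 1 + (β - 1) * x := pos_aux hβ hx0 hx1
  have hb : (0:ℝ) < 1 - x := by linarith
  have h1 : HasDerivAt (fun τ : ℝ => 1 + (β - 1) * τ) (β - 1) x := by
    simpa using ((hasDerivAt_id x).const_mul (β - 1)).const_add 1
  have h2 : HasDerivAt (fun τ : ℝ => 1 - τ) (-1) x := by
    exact (hasDerivAt_id x).const_sub 1
  have hl1 : HasDerivAt (fun τ : ℝ => Real.log (1 + (β - 1) * τ))
      ((β - 1) / (1 + (β - 1) * x)) x := h1.log ha.ne'
  have hl2 : HasDerivAt (fun τ : ℝ => Real.log (1 - τ)) ((-1) / (1 - x)) x :=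
    h2.log hb.ne'
  have hq1 : HasDerivAt (fun τ : ℝ => (β - 1) / (1 + (β - 1) * τ))
      ((0 * (1 + (β - 1) * x) - (β - 1) * (β - 1)) / (1 + (β - 1) * x) ^ 2) x :=
    (hasDerivAt_const x (β - 1)).div h1 ha.ne'
  have hq2 : HasDerivAt (fun τ : ℝ => (-1 : ℝ) / (1 - τ))
      ((0 * (1 - x) - (-1) * (-1)) / (1 - x) ^ 2) x :=
    (hasDerivAt_const x (-1 : ℝ)).div h2 hb.ne'
  have hfull := ((hl1.sub hl2).const_mul (-1)).add (h2.mul (hq1.sub hq2))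
  refine hfull.congr_deriv ?_
  simp only [Pi.sub_apply]
  field_simp
  ring

private lemma strictConcave_H {β : ℝ} (hβ : 0 < β) :
    StrictConcaveOn ℝ (Set.Ioo (0:ℝ) 1)
      (fun τ => (1 - τ) * (Real.log (1 + (β - 1) * τ) - Real.log (1 - τ))) := by
  apply strictConcaveOn_of_deriv2_neg (convex_Ioo 0 1)
  · intro x hx
    exact (hasDerivAt_H hβ hx.1 hx.2).continuousAt.continuousWithinAt
  · intro x hx
    rw [interior_Ioo] at hx
    have hev : deriv (fun τ : ℝ => (1 - τ) * (Real.log (1 + (β - 1) * τ) - Real.log (1 - τ)))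
        =ᶠ[nhds x] (fun y : ℝ => (-1) * (Real.log (1 + (β - 1) * y) - Real.log (1 - y)) +
          (1 - y) * ((β - 1) / (1 + (β - 1) * y) - (-1) / (1 - y))) := by
      filter_upwards [isOpen_Ioo.mem_nhds hx] with y hy
      exact (hasDerivAt_H hβ hy.1 hy.2).deriv
    have h2 : deriv^[2] (fun τ : ℝ => (1 - τ) * (Real.log (1 + (β - 1) * τ) - Real.log (1 - τ))) x
        = deriv (deriv (fun τ : ℝ => (1 - τ) * (Real.log (1 + (β - 1) * τ) - Real.log (1 - τ)))) x := rfl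
    rw [h2, hev.deriv_eq, (hasDerivAt_H1 hβ hx.1 hx.2).deriv]
    have ha : 0 < 1 + (β - 1) * x := pos_aux hβ hx.1 hx.2
    have hb : (0:ℝ) < 1 - x := by linarith [hx.2]
    apply div_neg_of_neg_of_pos
    · have : 0 < β ^ 2 := by positivity
      linarith
    · positivity

private lemma F_eq_H {β : ℝ} (hβ : 0 < β) {τ : ℝ} (h0 : 0 < τ) (h1 : τ < 1) :
    ((1 - τ) / 2) * Real.logb 2 (1 + β * τ / (1 - τ))
      = (1 / (2 * Real.log 2)) * ((1 - τ) * (Real.log (1 + (β - 1) * τ) - Real.log (1 - τ))) := by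
  have ha : 0 < 1 + (β - 1) * τ := pos_aux hβ h0 h1
  have hb : (0:ℝ) < 1 - τ := by linarith
  have harg : 1 + β * τ / (1 - τ) = (1 + (β - 1) * τ) / (1 - τ) := by
    field_simp; ring
  rw [harg, Real.logb, Real.log_div ha.ne' hb.ne']
  have hlog2 : Real.log 2 ≠ 0 := by
    have : (0:ℝ) < Real.log 2 := Real.log_pos (by norm_num)
    exact this.ne'
  field_simp

private lemma tendsto_one_aux {β : ℝ} (hβ : 0 < β) :
    Filter.Tendsto (fun τ : ℝ => ((1 - τ) / 2) * Real.logb 2 (1 + β * τ / (1 - τ)))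
      (nhdsWithin 1 (Set.Iio 1)) (nhds 0) := by
  have hev : ∀ᶠ τ in nhdsWithin (1:ℝ) (Set.Iio 1),
      ((1 - τ) / 2) * Real.logb 2 (1 + β * τ / (1 - τ)) =
      (1 / (2 * Real.log 2)) * ((1 - τ) * (Real.log (1 + (β - 1) * τ) - Real.log (1 - τ))) := by
    filter_upwards [Ioo_mem_nhdsLT (by norm_num : (1/2:ℝ) < 1)] with τ hτ
    exact F_eq_H hβ (by linarith [hτ.1]) hτ.2
  rw [Filter.tendsto_congr' hev]
  have ht1 : Filter.Tendsto (fun τ : ℝ => (1 - τ) * Real.log (1 + (β - 1) * τ))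
      (nhdsWithin 1 (Set.Iio 1)) (nhds 0) := by
    have hin : ContinuousAt (fun τ : ℝ => 1 + (β - 1) * τ) 1 := by fun_prop
    have hlog : ContinuousAt (fun τ : ℝ => Real.log (1 + (β - 1) * τ)) 1 :=
      (Real.continuousAt_log (by show (1:ℝ) + (β - 1) * 1 ≠ 0; intro h; nlinarith)).comp hin
    have hmul : ContinuousAt (fun τ : ℝ => (1 - τ) * Real.log (1 + (β - 1) * τ)) 1 :=
      (by fun_prop : ContinuousAt (fun τ : ℝ => 1 - τ) 1).mul hlog
    have h := hmul.tendsto.mono_left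
      (nhdsWithin_le_nhds : nhdsWithin (1:ℝ) (Set.Iio 1) ≤ nhds 1)
    simpa using h
  have ht2 : Filter.Tendsto (fun τ : ℝ => (1 - τ) * Real.log (1 - τ))
      (nhdsWithin 1 (Set.Iio 1)) (nhds 0) := by
    have hcomp : Filter.Tendsto (fun τ : ℝ => (1 - τ)) (nhdsWithin 1 (Set.Iio 1)) (nhds 0) := by
      have hct : ContinuousAt (fun τ : ℝ => 1 - τ) 1 := by fun_prop
      have h := hct.tendsto.mono_left
        (nhdsWithin_le_nhds : nhdsWithin (1:ℝ) (Set.Iio 1) ≤ nhds 1)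
      simpa using h
    have := (Real.continuous_mul_log.tendsto 0).comp hcomp
    simpa [Function.comp_def] using this
  have : Filter.Tendsto (fun τ : ℝ =>
      (1 / (2 * Real.log 2)) * ((1 - τ) * (Real.log (1 + (β - 1) * τ) - Real.log (1 - τ))))
      (nhdsWithin 1 (Set.Iio 1)) (nhds ((1 / (2 * Real.log 2)) * (0 - 0))) := by
    apply Filter.Tendsto.const_mul
    have h := ht1.sub ht2
    convert h using 2 with τ
    ring
  simpa using this

theorem R_concave_unique_max {β : ℝ} (hβ : 0 < β) :
    StrictConcaveOn ℝ (Set.Ioo (0:ℝ) 1)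
      (fun τ => ((1 - τ) / 2) * Real.logb 2 (1 + β * τ / (1 - τ))) ∧
    Filter.Tendsto (fun τ : ℝ => ((1 - τ) / 2) * Real.logb 2 (1 + β * τ / (1 - τ)))
      (nhdsWithin 0 (Set.Ioi 0)) (nhds 0) ∧
    Filter.Tendsto (fun τ : ℝ => ((1 - τ) / 2) * Real.logb 2 (1 + β * τ / (1 - τ)))
      (nhdsWithin 1 (Set.Iio 1)) (nhds 0) ∧
    ∃! τ₀ : ℝ, τ₀ ∈ Set.Ioo (0:ℝ) 1 ∧
      ∀ τ ∈ Set.Ioo (0:ℝ) 1,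
        ((1 - τ) / 2) * Real.logb 2 (1 + β * τ / (1 - τ)) ≤
        ((1 - τ₀) / 2) * Real.logb 2 (1 + β * τ₀ / (1 - τ₀)) := by
  set F : ℝ → ℝ := fun τ => ((1 - τ) / 2) * Real.logb 2 (1 + β * τ / (1 - τ)) with hF
  have hlog2 : (0:ℝ) < Real.log 2 := Real.log_pos (by norm_num)
  have hc : (0:ℝ) < 1 / (2 * Real.log 2) := by positivity
  have hH := strictConcave_H hβ
  have hconc : StrictConcaveOn ℝ (Set.Ioo (0:ℝ) 1) F := by
    refine ⟨convex_Ioo 0 1, fun x hx y hy hxy p q hp hq hpq => ?_⟩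
    have hz : p • x + q • y ∈ Set.Ioo (0:ℝ) 1 :=
      (convex_Ioo (0:ℝ) 1) hx hy hp.le hq.le hpq
    have ex := F_eq_H hβ hx.1 hx.2
    have ey := F_eq_H hβ hy.1 hy.2
    have ez := F_eq_H hβ hz.1 hz.2
    have hlt := hH.2 hx hy hxy hp hq hpq
    simp only [hF, smul_eq_mul] at *
    rw [ex, ey, ez]
    nlinarith [hlt]
  refine ⟨hconc, ?_, tendsto_one_aux hβ, ?_⟩
  -- limit at 0
  · have h1 : ContinuousAt (fun τ : ℝ => 1 + β * τ / (1 - τ)) 0 := by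
      fun_prop (disch := norm_num)
    have h2 : ContinuousAt (fun τ : ℝ => Real.logb 2 (1 + β * τ / (1 - τ))) 0 :=
      ContinuousAt.comp (x := (0:ℝ)) (g := Real.logb 2)
        (Real.continuousAt_logb (by norm_num : (1:ℝ) + β * 0 / (1 - 0) ≠ 0)) h1
    have hcont : ContinuousAt F 0 :=
      ((continuousAt_const.sub continuousAt_id).div_const 2).mul h2
    have h0 : F 0 = 0 := by simp [hF]
    have h := hcont.tendsto.mono_left
      (nhdsWithin_le_nhds : nhdsWithin (0:ℝ) (Set.Ioi 0) ≤ nhds 0)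
    rwa [h0] at h
  -- unique max
  · have hF0 : F 0 = 0 := by simp [hF]
    have hF1 : F 1 = 0 := by simp [hF]
    have hcont : ContinuousOn F (Set.Icc 0 1) := by
      intro x hx
      rcases eq_or_lt_of_le hx.2 with h1 | h1
      · subst h1
        rw [ContinuousWithinAt, hF1]
        have hsub : nhdsWithin (1:ℝ) (Set.Icc 0 1) ≤
            nhdsWithin 1 (Set.Iio 1) ⊔ pure 1 := by
          rw [← nhdsWithin_singleton, ← nhdsWithin_union]
          apply nhdsWithin_mono
          intro y hy
          rcases eq_or_lt_of_le hy.2 with h | h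
          · exact Or.inr (by simp [h])
          · exact Or.inl h
        apply Filter.Tendsto.mono_left _ hsub
        rw [Filter.tendsto_sup]
        exact ⟨tendsto_one_aux hβ, hF1 ▸ tendsto_pure_nhds F 1⟩
      · have hx1 : (1:ℝ) - x ≠ 0 := by intro h; linarith
        have h1x : (0:ℝ) < 1 - x := by linarith
        have harg : (0:ℝ) < 1 + β * x / (1 - x) := by
          have : 0 ≤ β * x / (1 - x) := div_nonneg (mul_nonneg hβ.le hx.1) h1x.le
          linarith
        have hin : ContinuousAt (fun τ : ℝ => 1 + β * τ / (1 - τ)) x := by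
          fun_prop (disch := assumption)
        have hlogb : ContinuousAt (fun τ : ℝ => Real.logb 2 (1 + β * τ / (1 - τ))) x :=
          ContinuousAt.comp (x := x) (g := Real.logb 2)
            (Real.continuousAt_logb harg.ne') hin
        exact (((continuousAt_const.sub continuousAt_id).div_const 2).mul hlogb).continuousWithinAt
    obtain ⟨x, hxmem, hxmax⟩ := isCompact_Icc.exists_isMaxOn (Set.nonempty_Icc.2 (by norm_num))
      hcont
    have hFhalf : 0 < F (1/2) := by
      have h : F (1/2) = (1/4) * Real.logb 2 (1 + β) := by
        show ((1 - (1/2:ℝ))/2) * Real.logb 2 (1 + β * (1/2) / (1 - 1/2)) = _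
        norm_num
      rw [h]
      have hp : 0 < Real.logb 2 (1 + β) := Real.logb_pos (by norm_num) (by linarith)
      positivity
    have hmax12 : F (1/2) ≤ F x := hxmax (Set.mem_Icc.2 ⟨by norm_num, by norm_num⟩)
    have hxI : x ∈ Set.Ioo (0:ℝ) 1 := by
      refine ⟨lt_of_le_of_ne hxmem.1 ?_, lt_of_le_of_ne hxmem.2 ?_⟩
      · intro h; rw [← h, hF0] at hmax12; linarith
      · intro h; rw [h, hF1] at hmax12; linarith
    refine ⟨x, ⟨hxI, fun τ hτ => hxmax (Set.mem_Icc.2 ⟨hτ.1.le, hτ.2.le⟩)⟩, ?_⟩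
    rintro y ⟨hyI, hymax⟩
    by_contra hne
    have h1 : F x ≤ F y := hymax x hxI
    have h2 : F y ≤ F x := hxmax (Set.mem_Icc.2 ⟨hyI.1.le, hyI.2.le⟩)
    have heq : F y = F x := le_antisymm h2 h1
    have hmem : (1/2 : ℝ) • y + (1/2 : ℝ) • x ∈ Set.Ioo (0:ℝ) 1 :=
      (convex_Ioo (0:ℝ) 1) hyI hxI (by norm_num) (by norm_num) (by norm_num)
    have hlt := hconc.2 hyI hxI hne (by norm_num : (0:ℝ) < 1/2)
      (by norm_num : (0:ℝ) < 1/2) (by norm_num)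
    have hle : F ((1/2 : ℝ) • y + (1/2 : ℝ) • x) ≤ F x :=
      hxmax (Set.mem_Icc.2 ⟨hmem.1.le, hmem.2.le⟩)
    rw [heq] at hlt
    simp only [smul_eq_mul] at hlt hle
    linarith
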